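/- (Purification) Every density operator ρ on a finite-dimensional Hilbert space H can be extended to a pure state: there exists a finite-dimensional Hilbert space H_B and a unit vector Φ ∈ H ⊗ H_B such that the partial trace of |Φ⟩⟨Φ| over H_B equals ρ. Moreover, H_B can be chosen with dim H_B = rank ρ, so that the partial trace of |Φ⟩⟨Φ| over H has no zero eigenvalues. -/

import Mathlib

open Finset Matrix ComplexOrder

/-- Purification: every density matrix ρ on ℂ^m admits a purification Φ ∈ H ⊗ H_B with
    dim H_B = rank ρ, whose partial trace over H_B is ρ and whose partial trace over H
    is positive definite (no zero eigenvalues). -/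
theorem stmt2 {m : ℕ} (ρ : Matrix (Fin m) (Fin m) ℂ)
    (hρ : ρ.PosSemidef) (htr : ρ.trace = 1) :
    ∃ (nB : ℕ) (Φ : Fin m × Fin nB → ℂ),
      nB = ρ.rank ∧
      (∑ p, ‖Φ p‖ ^ 2 = 1) ∧
      (∀ i j, ∑ l, Φ (i, l) * star (Φ (j, l)) = ρ i j) ∧
      (Matrix.of fun k l : Fin nB => ∑ i, Φ (i, k) * star (Φ (i, l))).PosDef := by
  classical
  have hH := hρ.1
  set U : Matrix (Fin m) (Fin m) ℂ := (hH.eigenvectorUnitary : Matrix (Fin m) (Fin m) ℂ) with hU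
  set lam : Fin m → ℝ := hH.eigenvalues with hlam
  have hUU : star U * U = 1 := Unitary.coe_star_mul_self _
  -- column orthonormality entrywise
  have hcol : ∀ k l : Fin m, ∑ i, star (U i k) * U i l = if k = l then 1 else 0 := by
    intro k l
    have := congrFun (congrFun hUU k) l
    simpa [Matrix.mul_apply, Matrix.one_apply, Matrix.conjTranspose_apply] using this
  -- spectral decomposition entrywise
  have hspec : ∀ i j : Fin m, ρ i j = ∑ k, (lam k : ℂ) * (U i k * star (U j k)) := by
    intro i j
    have := congrFun (congrFun (hH.spectral_theorem.trans (Unitary.conjStarAlgAut_apply _ _)) i) j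
    rw [this]
    simp only [Matrix.mul_apply, Matrix.diagonal_apply, Function.comp_apply, Matrix.star_apply,
      mul_ite, mul_zero, Finset.sum_ite_eq', Finset.mem_univ, if_true]
    exact Finset.sum_congr rfl fun k _ => by simp only [← hU, ← hlam]; rw [mul_right_comm, mul_comm]; rfl
  have hnn : ∀ k, 0 ≤ lam k := hρ.eigenvalues_nonneg
  have hsub : ∀ {M : Type} [AddCommMonoid M] (f : Fin m → M), (∀ k, lam k = 0 → f k = 0) →
      ∑ k : {k // lam k ≠ 0}, f (k : Fin m) = ∑ k, f k := by
    intro M _ f hf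
    calc ∑ k : {k // lam k ≠ 0}, f (k : Fin m)
        = ∑ k ∈ Finset.univ.filter (fun k => lam k ≠ 0), f k :=
        (Finset.sum_subtype _ (by simp) f).symm
      _ = ∑ k, f k := Finset.sum_filter_of_ne (fun x _ hx => fun h0 => hx (hf x h0))
  set nB := Fintype.card {k // lam k ≠ 0} with hnB
  set e : Fin nB ≃ {k // lam k ≠ 0} := (Fintype.equivFin {k // lam k ≠ 0}).symm with he
  refine ⟨nB, fun p => (Real.sqrt (lam (e p.2)) : ℂ) * U p.1 (e p.2), ?_, ?_, ?_, ?_⟩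
  · rw [hH.rank_eq_card_non_zero_eigs]
  · -- trace condition
    have hconorm : ∀ k : Fin m, ∑ i, ‖U i k‖ ^ 2 = 1 := by
      intro k
      have h1 : ∑ i, star (U i k) * U i k = 1 := by simpa using hcol k k
      have h2 : ((∑ i, ‖U i k‖ ^ 2 : ℝ) : ℂ) = 1 := by
        push_cast
        rw [← h1]
        refine Finset.sum_congr rfl fun i _ => ?_
        rw [Complex.star_def, RCLike.conj_mul]
        rfl
      exact_mod_cast h2
    have t1 : ρ.trace = ∑ j, (lam j : ℂ) := by
      rw [Matrix.trace]
      unfold Matrix.diag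
      calc ∑ k, ρ k k = ∑ k, ∑ j, (lam j : ℂ) * (U k j * star (U k j)) :=
            Finset.sum_congr rfl fun k _ => hspec k k
        _ = ∑ j, (lam j : ℂ) * ∑ k, star (U k j) * U k j := by
            rw [Finset.sum_comm]
            exact Finset.sum_congr rfl fun j _ => by
              rw [Finset.mul_sum]
              exact Finset.sum_congr rfl fun k _ => by rw [mul_comm (U k j)]
        _ = ∑ j, (lam j : ℂ) := by
            refine Finset.sum_congr rfl fun j _ => ?_
            rw [hcol j j, if_pos rfl, mul_one]
    have t2 : ∑ j, lam j = 1 := by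
      have : ((∑ j, lam j : ℝ) : ℂ) = 1 := by push_cast; rw [← t1, htr]
      exact_mod_cast this
    have t3 : ∑ l : Fin nB, lam (e l) = 1 := by
      rw [Equiv.sum_comp e (fun k : {k // lam k ≠ 0} => lam (k : Fin m)),
        hsub (fun k => lam k) (fun k h => h)]
      exact t2
    calc ∑ p : Fin m × Fin nB, ‖(Real.sqrt (lam (e p.2)) : ℂ) * U p.1 (e p.2)‖ ^ 2
        = ∑ i, ∑ l, lam (e l) * ‖U i (e l)‖ ^ 2 := by
          rw [Fintype.sum_prod_type]
          refine Finset.sum_congr rfl fun i _ => Finset.sum_congr rfl fun l _ => ?_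
          rw [norm_mul, mul_pow, Complex.norm_real, Real.norm_eq_abs,
            abs_of_nonneg (Real.sqrt_nonneg _), Real.sq_sqrt (hnn _)]
      _ = ∑ l : Fin nB, lam (e l) * ∑ i, ‖U i (e l)‖ ^ 2 := by
          rw [Finset.sum_comm]
          exact Finset.sum_congr rfl fun l _ => (Finset.mul_sum _ _ _).symm
      _ = 1 := by
          simp only [hconorm, mul_one]
          exact t3
  · -- partial trace over H_B is ρ
    intro i j
    rw [hspec i j]
    have hΦ : ∀ (a b : Fin m) (l : Fin nB),
        ((Real.sqrt (lam (e l)) : ℂ) * U a (e l)) * star ((Real.sqrt (lam (e l)) : ℂ) * U b (e l))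
          = (lam (e l) : ℂ) * (U a (e l) * star (U b (e l))) := by
      intro a b l
      have h1 : star ((Real.sqrt (lam (e l)) : ℂ)) = (Real.sqrt (lam (e l)) : ℂ) := by
        simp [Complex.conj_ofReal]
      rw [star_mul', h1, mul_mul_mul_comm, ← Complex.ofReal_mul, Real.mul_self_sqrt (hnn _)]
    calc ∑ l : Fin nB, ((Real.sqrt (lam (e l)) : ℂ) * U i (e l))
            * star ((Real.sqrt (lam (e l)) : ℂ) * U j (e l))
        = ∑ l : Fin nB, (lam (e l) : ℂ) * (U i (e l) * star (U j (e l))) :=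
          Finset.sum_congr rfl fun l _ => hΦ i j l
      _ = ∑ k : {k // lam k ≠ 0}, (lam (k : Fin m) : ℂ) * (U i k * star (U j k)) :=
          Equiv.sum_comp e (fun k : {k // lam k ≠ 0} => (lam (k : Fin m) : ℂ) * (U i k * star (U j k)))
      _ = ∑ k, (lam k : ℂ) * (U i k * star (U j k)) :=
          hsub (fun k => (lam k : ℂ) * (U i k * star (U j k))) (fun k h => by simp [h])
  · -- partial trace over H is positive definite
    have hdiag : (Matrix.of fun k l : Fin nB =>
        ∑ i, ((Real.sqrt (lam (e k)) : ℂ) * U i (e k))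
          * star ((Real.sqrt (lam (e l)) : ℂ) * U i (e l)))
        = Matrix.diagonal (fun k : Fin nB => (lam (e k) : ℂ)) := by
      ext k l
      have h1 : ∀ i, ((Real.sqrt (lam (e k)) : ℂ) * U i (e k))
          * star ((Real.sqrt (lam (e l)) : ℂ) * U i (e l))
          = ((Real.sqrt (lam (e k)) : ℂ) * (Real.sqrt (lam (e l)) : ℂ))
            * (star (U i (e l)) * U i (e k)) := by
        intro i
        have hs : star ((Real.sqrt (lam (e l)) : ℂ)) = (Real.sqrt (lam (e l)) : ℂ) :=
          Complex.conj_ofReal _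
        rw [star_mul', hs, mul_mul_mul_comm, mul_comm (U i (e k))]
      simp only [Matrix.of_apply, Matrix.diagonal_apply]
      rw [Finset.sum_congr rfl fun i _ => h1 i, ← Finset.mul_sum, hcol (e l) (e k)]
      by_cases h : k = l
      · subst h
        rw [if_pos rfl, if_pos rfl, mul_one, ← Complex.ofReal_mul, Real.mul_self_sqrt (hnn _)]
      · have h2 : ((e l : Fin m)) ≠ (e k : Fin m) :=
          fun hh => h (e.injective (Subtype.ext hh)).symm
        rw [if_neg h2, if_neg h, mul_zero]
    rw [hdiag]
    refine Matrix.posDef_diagonal_iff.mpr fun k => ?_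
    exact Complex.zero_lt_real.mpr (lt_of_le_of_ne (hnn _) (Ne.symm (e k).2))
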